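/- Let (A_1, A_2, …) be a sequence of d×d real matrices with all entries positive, such that γ := sup_i τ(A_i) < 1. Then there exist a probability vector X* ∈ S_d with all entries positive and a constant C > 0 such that for every X ∈ S_d and every n ≥ 1, ‖P_n X/‖P_n X‖ − X*‖ ≤ C·γ^n, where P_n := A_1⋯A_n. -/

import Mathlib

open Matrix Filter Finset Topology
open scoped ENNReal Classical

/-- Hypothesis (H): the nonzero entries of `A` form a nonempty rectangular block
`I_A × J_A`. -/
def satH {d1 d2 : ℕ} (A : Matrix (Fin d1) (Fin d2) ℝ) : Prop :=
  ∃ (I : Set (Fin d1)) (J : Set (Fin d2)), I.Nonempty ∧ J.Nonempty ∧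
    ∀ i j, A i j ≠ 0 ↔ i ∈ I ∧ j ∈ J

/-- The δ-coefficient of a matrix: `sup` of `log((A i j · A k l)/(A k j · A i l))` over
indices in the nonzero block if (H) holds, `+∞` otherwise. -/
noncomputable def deltaC {d1 d2 : ℕ} (A : Matrix (Fin d1) (Fin d2) ℝ) : ℝ≥0∞ :=
  if satH A then
    ENNReal.ofReal (sSup {x | ∃ i k j l, A i j ≠ 0 ∧ A k j ≠ 0 ∧ A i l ≠ 0 ∧ A k l ≠ 0 ∧
      x = Real.log (A i j * A k l / (A k j * A i l))})
  else ⊤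

/-- The generalized contraction coefficient `τ(A) = tanh(δ(A)/4)`, equal to `1`
when `δ(A) = +∞`. -/
noncomputable def tauC {d1 d2 : ℕ} (A : Matrix (Fin d1) (Fin d2) ℝ) : ℝ :=
  if deltaC A = ⊤ then 1 else Real.tanh ((deltaC A).toReal / 4)

/-- ℓ¹-norm (sum of absolute values of the entries) of a vector. -/
noncomputable def l1 {d : ℕ} (v : Fin d → ℝ) : ℝ := ∑ i, |v i|

/-- Normalization of a vector by its ℓ¹-norm. -/
noncomputable def nrm {d : ℕ} (v : Fin d → ℝ) : Fin d → ℝ := (l1 v)⁻¹ • v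

/-- Probability vector: nonnegative entries summing to `1`. -/
def probVec {d : ℕ} (X : Fin d → ℝ) : Prop := (∀ i, 0 ≤ X i) ∧ ∑ i, X i = 1

/-- `blockProd A m n = A (m+1) * A (m+2) * ⋯ * A n` (identity if `n ≤ m`). -/
noncomputable def blockProd {d : ℕ} (A : ℕ → Matrix (Fin d) (Fin d) ℝ) (m n : ℕ) :
    Matrix (Fin d) (Fin d) ℝ :=
  ((List.range (n - m)).map fun i => A (m + 1 + i)).prod

/-- key square identity -/
lemma qform {p q v : ℝ} (hp : 1 ≤ p) (hq : 1 ≤ q) :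
    (p+q)^2*(1+(p^2*q^2-1)*v) ≤ (1+p*q)^2*((1+(q^2-1)*v)*(1+(p^2-1)*v)) := by
  have key : (1+p*q)^2*((1+(q^2-1)*v)*(1+(p^2-1)*v)) - (p+q)^2*(1+(p^2*q^2-1)*v)
      = (p^2-1)*(q^2-1)*(1-(1+p*q)*v)^2 := by ring
  nlinarith [mul_nonneg (mul_nonneg (by nlinarith : (0:ℝ) ≤ p^2-1) (by nlinarith : (0:ℝ) ≤ q^2-1)) (sq_nonneg (1-(1+p*q)*v))]

/-- core log inequality -/
lemma log_ineq {p q : ℝ} (hp : 1 ≤ p) (hq : 1 ≤ q) :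
    (1 + p*q)/(p + q) ≤ p ^ ((q-1)/(q+1)) := by
  have hq0 : (0:ℝ) < q := lt_of_lt_of_le one_pos hq
  have hp0 : (0:ℝ) < p := lt_of_lt_of_le one_pos hp
  set f : ℝ → ℝ := fun y => (q-1)/(q+1) * Real.log y + Real.log (q + y) - Real.log (1 + q*y) with hf
  have hderiv : ∀ y ∈ Set.Ici (1:ℝ), HasDerivAt f
      ((q-1)/(q+1) * y⁻¹ + ((q+y)⁻¹ - q*(1+q*y)⁻¹)) y := by
    intro y hy
    have hy0 : (0:ℝ) < y := lt_of_lt_of_le one_pos hy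
    have h1 : HasDerivAt (fun y : ℝ => Real.log y) y⁻¹ y := Real.hasDerivAt_log (ne_of_gt hy0)
    have h2 : HasDerivAt (fun y : ℝ => q + y) 1 y := (hasDerivAt_id y).const_add q
    have h3 : HasDerivAt (fun y : ℝ => Real.log (q+y)) ((q+y)⁻¹ * 1) y :=
      (Real.hasDerivAt_log (by positivity)).comp y h2
    have h4 : HasDerivAt (fun y : ℝ => 1 + q*y) q y := by
      simpa using ((hasDerivAt_id y).const_mul q).const_add 1
    have h5 : HasDerivAt (fun y : ℝ => Real.log (1+q*y)) ((1+q*y)⁻¹ * q) y :=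
      (Real.hasDerivAt_log (by positivity)).comp y h4
    have := ((h1.const_mul ((q-1)/(q+1))).add h3).sub h5
    refine this.congr_deriv ?_
    ring
  have hmono : MonotoneOn f (Set.Ici 1) := by
    apply monotoneOn_of_deriv_nonneg (convex_Ici 1)
    · exact fun y hy => ((hderiv y hy).differentiableAt).continuousAt.continuousWithinAt
    · intro y hy
      rw [interior_Ici] at hy
      exact ((hderiv y (Set.mem_Ici.2 (le_of_lt (Set.mem_Ioi.1 hy)))).differentiableAt).differentiableWithinAt
    · intro y hy
      rw [interior_Ici] at hy
      have hy1 : (1:ℝ) ≤ y := le_of_lt hy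
      have hy0 : (0:ℝ) < y := lt_of_lt_of_le one_pos hy1
      rw [(hderiv y hy1).deriv]
      have hrepr : (q-1)/(q+1) * y⁻¹ + ((q+y)⁻¹ - q*(1+q*y)⁻¹)
          = ((q-1)*q*(y-1)^2) / ((q+1)*(y*((q+y)*(1+q*y)))) := by
        field_simp
        ring
      rw [hrepr]
      apply div_nonneg
      · exact mul_nonneg (mul_nonneg (by linarith) hq0.le) (sq_nonneg _)
      · positivity
  have h01 : f 1 ≤ f p := hmono (Set.mem_Ici.2 le_rfl) (Set.mem_Ici.2 hp) hp
  have hf1 : f 1 = 0 := by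
    simp only [hf, Real.log_one, mul_zero, mul_one]
    rw [add_comm q 1]
    ring
  rw [hf1] at h01
  have hlog : Real.log ((1+q*p)/(q+p)) ≤ (q-1)/(q+1) * Real.log p := by
    rw [Real.log_div (by positivity) (by positivity)]
    simp only [hf] at h01
    linarith
  have hpos : (0:ℝ) < (1+q*p)/(q+p) := by positivity
  calc (1+p*q)/(p+q) = (1+q*p)/(q+p) := by ring_nf
    _ = Real.exp (Real.log ((1+q*p)/(q+p))) := (Real.exp_log hpos).symm
    _ ≤ Real.exp ((q-1)/(q+1) * Real.log p) := Real.exp_le_exp.2 hlog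
    _ = p ^ ((q-1)/(q+1)) := by rw [Real.rpow_def_of_pos hp0]; ring_nf
lemma scalar_step {β B u v lam : ℝ} (hβ : 0 < β) (hβB : β ≤ B) (hlam : 1 ≤ lam)
    (hu0 : 0 ≤ u) (hu1 : u ≤ 1) (hv0 : 0 ≤ v) (hv1 : v ≤ 1)
    (hc : u*(1-v) ≤ lam*(v*(1-u))) :
    β + (B-β)*u ≤ (B/β) ^ ((Real.sqrt lam - 1)/(Real.sqrt lam + 1)) * (β + (B-β)*v) := by
  set q := Real.sqrt lam with hqdef
  have hq : 1 ≤ q := by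
    rw [hqdef, show (1:ℝ) = Real.sqrt 1 by simp]
    exact Real.sqrt_le_sqrt hlam
  have hq2 : q^2 = lam := Real.sq_sqrt (by linarith)
  set b := B/β with hbdef
  have hb : 1 ≤ b := (one_le_div hβ).2 hβB
  set p := Real.sqrt b with hpdef
  have hp : 1 ≤ p := by
    rw [hpdef, show (1:ℝ) = Real.sqrt 1 by simp]
    exact Real.sqrt_le_sqrt hb
  have hp2 : p^2 = b := Real.sq_sqrt (by linarith)
  set τ := (q-1)/(q+1) with hτdef
  have hτ0 : 0 ≤ τ := div_nonneg (by linarith) (by linarith)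
  -- step 1: u*(1+(lam-1)*v) ≤ lam*v
  have h1 : u*(1+(lam-1)*v) ≤ lam*v := by nlinarith
  -- step 2: key polynomial bound with K₀
  have hK0 : 1+(b*lam-1)*v ≤ ((1+p*q)/(p+q))^2 * ((1+(lam-1)*v)*(1+(b-1)*v)) := by
    have h2 := qform (v := v) hp hq
    rw [hp2, hq2] at h2
    have hpq : (0:ℝ) < (p+q)^2 := by positivity
    rw [div_pow, div_mul_eq_mul_div ((1+p*q)^2) ((p+q)^2), le_div_iff₀ hpq]
    nlinarith [h2]
  -- step 3: K₀ ≤ K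
  have hKK : ((1+p*q)/(p+q))^2 ≤ b ^ τ := by
    have h3 := log_ineq hp hq
    have h4 : ((1+p*q)/(p+q))^2 ≤ (p ^ τ)^2 := by
      apply pow_le_pow_left₀ (by positivity) (by rw [hτdef]; exact h3)
    refine h4.trans (le_of_eq ?_)
    rw [← Real.rpow_natCast (p ^ τ) 2, ← Real.rpow_mul (by positivity), ← hp2,
      ← Real.rpow_natCast p 2, ← Real.rpow_mul (by positivity)]
    norm_num
    rw [mul_comm]
  have hposv : (0:ℝ) < 1+(lam-1)*v := by nlinarith
  have hposbv : (0:ℝ) < 1+(b-1)*v := by nlinarith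
  -- combine: (β + (B-β)*u)*(1+(lam-1)*v) ≤ β*(1+(b*lam-1)*v)
  have h5 : (β + (B-β)*u)*(1+(lam-1)*v) ≤ β*(1+(b*lam-1)*v) := by
    have h6 : (B-β)*(u*(1+(lam-1)*v)) ≤ (B-β)*(lam*v) :=
      mul_le_mul_of_nonneg_left h1 (by linarith)
    have hBb : B = β*b := by rw [hbdef]; field_simp
    nlinarith [h6]
  have h7 : (β + (B-β)*u)*(1+(lam-1)*v) ≤ (b ^ τ * (β + (B-β)*v))*(1+(lam-1)*v) := by
    have h8 : β*(1+(b*lam-1)*v) ≤ β*(((1+p*q)/(p+q))^2 * ((1+(lam-1)*v)*(1+(b-1)*v))) :=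
      mul_le_mul_of_nonneg_left hK0 hβ.le
    have h9 : β*(((1+p*q)/(p+q))^2 * ((1+(lam-1)*v)*(1+(b-1)*v)))
        ≤ β*(b ^ τ * ((1+(lam-1)*v)*(1+(b-1)*v))) := by
      apply mul_le_mul_of_nonneg_left _ hβ.le
      exact mul_le_mul_of_nonneg_right hKK (by positivity)
    have h10 : β*(b ^ τ * ((1+(lam-1)*v)*(1+(b-1)*v)))
        = (b ^ τ * (β + (B-β)*v))*(1+(lam-1)*v) := by
      have hBb : B = β*b := by rw [hbdef]; field_simp
      rw [hBb]; ring
    linarith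
  exact le_of_mul_le_mul_right h7 hposv
def Dom {d : ℕ} (R : ℝ) (x y : Fin d → ℝ) : Prop := ∀ i k, x i * y k ≤ R * (y i * x k)

lemma lemB {d : ℕ} (hd : 0 < d) (a b t : Fin d → ℝ) (ha : ∀ j, 0 < a j) (hb : ∀ j, 0 < b j)
    {β B lam : ℝ} (hβ : 0 < β) (ht : ∀ j, β ≤ t j ∧ t j ≤ B) (hlam : 1 ≤ lam)
    (hcross : ∀ j l, a j * b l ≤ lam * (a l * b j)) :
    (∑ j, a j * t j) * (∑ j, b j) ≤
      (B/β) ^ ((Real.sqrt lam - 1)/(Real.sqrt lam + 1)) * ((∑ j, a j) * (∑ j, b j * t j)) := by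
  haveI : Nonempty (Fin d) := ⟨⟨0, hd⟩⟩
  obtain ⟨j0⟩ : Nonempty (Fin d) := inferInstance
  have hβB : β ≤ B := le_trans (ht j0).1 (ht j0).2
  set τ := (Real.sqrt lam - 1)/(Real.sqrt lam + 1) with hτ
  have hq1 : 1 ≤ Real.sqrt lam := by
    rw [show (1:ℝ) = Real.sqrt 1 by simp]; exact Real.sqrt_le_sqrt hlam
  have hτ0 : 0 ≤ τ := div_nonneg (by linarith) (by linarith)
  have hSA : 0 < ∑ j, a j := Finset.sum_pos (fun j _ => ha j) univ_nonempty
  have hSB : 0 < ∑ j, b j := Finset.sum_pos (fun j _ => hb j) univ_nonempty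
  rcases eq_or_lt_of_le hβB with heq | hlt
  · -- B = β : all t j = β
    have htj : ∀ j, t j = β := fun j => le_antisymm (heq ▸ (ht j).2) (ht j).1
    have e1 : (∑ j, a j * t j) = β * ∑ j, a j := by
      rw [Finset.mul_sum]; exact Finset.sum_congr rfl fun j _ => by rw [htj j]; ring
    have e2 : (∑ j, b j * t j) = β * ∑ j, b j := by
      rw [Finset.mul_sum]; exact Finset.sum_congr rfl fun j _ => by rw [htj j]; ring
    rw [e1, e2, ← heq, div_self (ne_of_gt hβ), Real.one_rpow, one_mul]
    ring_nf
    exact le_rfl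
  · -- β < B
    set σ : Fin d → ℝ := fun j => (t j - β)/(B - β) with hσ
    have hBβ : 0 < B - β := by linarith
    have hσ0 : ∀ j, 0 ≤ σ j := fun j => div_nonneg (by linarith [(ht j).1]) hBβ.le
    have hσ1 : ∀ j, σ j ≤ 1 := fun j => by
      rw [hσ]; exact (div_le_one hBβ).2 (by linarith [(ht j).2])
    have htσ : ∀ j, t j = β + (B-β)*σ j := fun j => by
      rw [hσ]; field_simp; ring
    set U := ∑ j, a j * σ j with hU
    set V := ∑ j, b j * σ j with hV
    set SA := ∑ j, a j with hSAdef
    set SB := ∑ j, b j with hSBdef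
    -- B1 : U*(SB-V) ≤ lam*(V*(SA-U))
    have hB1 : U*(SB-V) ≤ lam*(V*(SA-U)) := by
      have e1 : U*(SB-V) = ∑ j, ∑ l, (a j * σ j) * (b l * (1 - σ l)) := by
        rw [hU, hV, hSBdef, ← Finset.sum_sub_distrib, Finset.sum_mul_sum]
        exact Finset.sum_congr rfl fun j _ => Finset.sum_congr rfl fun l _ => by ring
      have e2 : lam*(V*(SA-U)) = ∑ j, ∑ l, lam * ((b j * σ j) * (a l * (1 - σ l))) := by
        rw [hU, hV, hSAdef, ← Finset.sum_sub_distrib, Finset.sum_mul_sum]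
        rw [Finset.mul_sum]
        exact Finset.sum_congr rfl fun j _ => by
          rw [Finset.mul_sum]
          exact Finset.sum_congr rfl fun l _ => by ring
      rw [e1, e2]
      apply Finset.sum_le_sum
      intro j _
      apply Finset.sum_le_sum
      intro l _
      have h := hcross j l
      have hnn : 0 ≤ σ j * (1 - σ l) := mul_nonneg (hσ0 j) (by linarith [hσ1 l])
      calc (a j * σ j) * (b l * (1 - σ l)) = (a j * b l) * (σ j * (1 - σ l)) := by ring
        _ ≤ (lam * (a l * b j)) * (σ j * (1 - σ l)) := mul_le_mul_of_nonneg_right h hnn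
        _ = lam * ((b j * σ j) * (a l * (1 - σ l))) := by ring
    set u := U/SA with hu
    set v := V/SB with hv
    have hU0 : 0 ≤ U := Finset.sum_nonneg fun j _ => mul_nonneg (ha j).le (hσ0 j)
    have hV0 : 0 ≤ V := Finset.sum_nonneg fun j _ => mul_nonneg (hb j).le (hσ0 j)
    have hU1 : U ≤ SA := Finset.sum_le_sum fun j _ => by
      nlinarith [ha j, hσ1 j, hσ0 j]
    have hV1 : V ≤ SB := Finset.sum_le_sum fun j _ => by
      nlinarith [hb j, hσ1 j, hσ0 j]
    have hu0 : 0 ≤ u := div_nonneg hU0 hSA.le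
    have hu1 : u ≤ 1 := (div_le_one hSA).2 hU1
    have hv0 : 0 ≤ v := div_nonneg hV0 hSB.le
    have hv1 : v ≤ 1 := (div_le_one hSB).2 hV1
    have hcuv : u*(1-v) ≤ lam*(v*(1-u)) := by
      have e1 : u*(1-v) = (U*(SB-V))/(SA*SB) := by
        rw [hu, hv]; field_simp
      have e2 : lam*(v*(1-u)) = (lam*(V*(SA-U)))/(SA*SB) := by
        rw [hu, hv]; field_simp
      rw [e1, e2]
      have := mul_le_mul_of_nonneg_right hB1 (inv_nonneg.2 (le_of_lt (mul_pos hSA hSB)))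
      simpa [div_eq_mul_inv] using this
    have hmain := scalar_step hβ hβB hlam hu0 hu1 hv0 hv1 hcuv
    rw [← hτ] at hmain
    have eA : ∑ j, a j * t j = SA * (β + (B-β)*u) := by
      have : ∑ j, a j * t j = β * SA + (B-β) * U := by
        rw [hU, hSAdef, Finset.mul_sum, Finset.mul_sum, ← Finset.sum_add_distrib]
        exact Finset.sum_congr rfl fun j _ => by rw [htσ j]; ring
      rw [this, hu]; field_simp; try tauto
    have eB : ∑ j, b j * t j = SB * (β + (B-β)*v) := by
      have : ∑ j, b j * t j = β * SB + (B-β) * V := by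
        rw [hV, hSBdef, Finset.mul_sum, Finset.mul_sum, ← Finset.sum_add_distrib]
        exact Finset.sum_congr rfl fun j _ => by rw [htσ j]; ring
      rw [this, hv]; field_simp; try tauto
    rw [eA, eB]
    calc SA * (β + (B-β)*u) * SB = (SA*SB) * (β + (B-β)*u) := by ring
      _ ≤ (SA*SB) * ((B/β) ^ τ * (β + (B-β)*v)) :=
        mul_le_mul_of_nonneg_left hmain (le_of_lt (mul_pos hSA hSB))
      _ = (B/β) ^ τ * (SA * (SB * (β + (B-β)*v))) := by ring
lemma mulVec_apply' {d : ℕ} (A : Matrix (Fin d) (Fin d) ℝ) (x : Fin d → ℝ) (i : Fin d) :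
    (A *ᵥ x) i = ∑ j, A i j * x j := rfl

lemma dom_mono {d : ℕ} {R R' : ℝ} {x y : Fin d → ℝ} (h : Dom R x y) (hR : R ≤ R')
    (hx : ∀ i, 0 ≤ x i) (hy : ∀ i, 0 ≤ y i) : Dom R' x y := fun i k =>
  (h i k).trans (mul_le_mul_of_nonneg_right hR (mul_nonneg (hy i) (hx k)))

/-- K1 : diameter bound -/
lemma dom_of_cross {d : ℕ} {A : Matrix (Fin d) (Fin d) ℝ} {lam : ℝ}
    (hcross : ∀ i k j l, A i j * A k l ≤ lam * (A k j * A i l))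
    {x y : Fin d → ℝ} (hx : ∀ j, 0 ≤ x j) (hy : ∀ j, 0 ≤ y j) :
    Dom lam (A *ᵥ x) (A *ᵥ y) := by
  intro i k
  rw [mulVec_apply', mulVec_apply', mulVec_apply', mulVec_apply']
  calc (∑ j, A i j * x j) * (∑ l, A k l * y l)
      = ∑ j, ∑ l, (A i j * x j) * (A k l * y l) := Finset.sum_mul_sum _ _ _ _
    _ ≤ ∑ j, ∑ l, lam * ((A k j * x j) * (A i l * y l)) := by
        apply Finset.sum_le_sum; intro j _
        apply Finset.sum_le_sum; intro l _
        have h := hcross i k j l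
        have hnn : 0 ≤ x j * y l := mul_nonneg (hx j) (hy l)
        calc (A i j * x j) * (A k l * y l) = (A i j * A k l) * (x j * y l) := by ring
          _ ≤ (lam * (A k j * A i l)) * (x j * y l) := mul_le_mul_of_nonneg_right h hnn
          _ = lam * ((A k j * x j) * (A i l * y l)) := by ring
    _ = ∑ l, ∑ j, lam * ((A k j * x j) * (A i l * y l)) := Finset.sum_comm
    _ = lam * ((∑ l, A i l * y l) * (∑ j, A k j * x j)) := by
        rw [Finset.sum_mul_sum, Finset.mul_sum]
        exact Finset.sum_congr rfl fun l _ => by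
          rw [Finset.mul_sum]
          exact Finset.sum_congr rfl fun j _ => by ring

/-- K2 : contraction -/
lemma dom_contract {d : ℕ} (hd : 0 < d) {A : Matrix (Fin d) (Fin d) ℝ} {lam : ℝ}
    (hA : ∀ i j, 0 < A i j) (hlam : 1 ≤ lam)
    (hcross : ∀ i k j l, A i j * A k l ≤ lam * (A k j * A i l))
    {x y : Fin d → ℝ} (hx : ∀ j, 0 < x j) (hy : ∀ j, 0 < y j)
    {R : ℝ} (hR : 1 ≤ R) (hdom : Dom R x y) :
    Dom (R ^ ((Real.sqrt lam - 1)/(Real.sqrt lam + 1))) (A *ᵥ x) (A *ᵥ y) := by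
  haveI : Nonempty (Fin d) := ⟨⟨0, hd⟩⟩
  set τ := (Real.sqrt lam - 1)/(Real.sqrt lam + 1) with hτ
  have hq1 : 1 ≤ Real.sqrt lam := by
    rw [show (1:ℝ) = Real.sqrt 1 by simp]; exact Real.sqrt_le_sqrt hlam
  have hτ0 : 0 ≤ τ := div_nonneg (by linarith) (by linarith)
  intro i k
  set t : Fin d → ℝ := fun j => x j / y j with htdef
  have htpos : ∀ j, 0 < t j := fun j => div_pos (hx j) (hy j)
  set β := Finset.univ.inf' univ_nonempty t with hβdef
  set B := Finset.univ.sup' univ_nonempty t with hBdef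
  have hβt : ∀ j, β ≤ t j := fun j => Finset.inf'_le t (mem_univ j)
  have htB : ∀ j, t j ≤ B := fun j => Finset.le_sup' t (mem_univ j)
  obtain ⟨j2, -, hj2⟩ := Finset.exists_mem_eq_inf' (univ_nonempty (α := Fin d)) t
  obtain ⟨j1, -, hj1⟩ := Finset.exists_mem_eq_sup' (univ_nonempty (α := Fin d)) t
  have hβeq : β = t j2 := hβdef.trans hj2
  have hBeq : B = t j1 := hBdef.trans hj1
  have hβ0 : 0 < β := by rw [hβeq]; exact htpos j2
  have hBR : B / β ≤ R := by
    rw [hβeq, hBeq]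
    have e : t j1 / t j2 = (x j1 * y j2)/(y j1 * x j2) := by
      rw [htdef]
      field_simp
    rw [e, div_le_iff₀ (mul_pos (hy j1) (hx j2))]
    linarith [hdom j1 j2]
  have hcrossab : ∀ j l, (A i j * y j) * (A k l * y l) ≤ lam * ((A i l * y l) * (A k j * y j)) := by
    intro j l
    have h := hcross i k j l
    have hnn : 0 ≤ y j * y l := mul_nonneg (hy j).le (hy l).le
    calc (A i j * y j) * (A k l * y l) = (A i j * A k l) * (y j * y l) := by ring
      _ ≤ (lam * (A k j * A i l)) * (y j * y l) := mul_le_mul_of_nonneg_right h hnn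
      _ = lam * ((A i l * y l) * (A k j * y j)) := by ring
  have happ := lemB hd (fun j => A i j * y j) (fun j => A k j * y j) t
    (fun j => mul_pos (hA i j) (hy j)) (fun j => mul_pos (hA k j) (hy j)) hβ0
    (fun j => ⟨hβt j, htB j⟩) hlam hcrossab
  have s1 : ∑ j, (A i j * y j) * t j = (A *ᵥ x) i := by
    rw [mulVec_apply']
    exact Finset.sum_congr rfl fun j _ => by
      have hne : (y j) ≠ 0 := (hy j).ne'
      simp only [htdef]
      field_simp
  have s4 : ∑ j, (A k j * y j) * t j = (A *ᵥ x) k := by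
    rw [mulVec_apply']
    exact Finset.sum_congr rfl fun j _ => by
      have hne : (y j) ≠ 0 := (hy j).ne'
      simp only [htdef]
      field_simp
  have s2 : ∑ j, (A k j * y j) = (A *ᵥ y) k := (mulVec_apply' A y k).symm
  have s3 : ∑ j, (A i j * y j) = (A *ᵥ y) i := (mulVec_apply' A y i).symm
  rw [s1, s2, s3, s4] at happ
  refine happ.trans ?_
  apply mul_le_mul_of_nonneg_right
  · exact Real.rpow_le_rpow (div_nonneg (by rw [hBeq]; exact (htpos j1).le) hβ0.le) hBR hτ0
  · rw [mulVec_apply', mulVec_apply']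
    exact mul_nonneg (Finset.sum_nonneg fun j _ => mul_nonneg (hA i j).le (hy j).le)
      (Finset.sum_nonneg fun j _ => mul_nonneg (hA k j).le (hx j).le)
lemma posMatrix_pack {d : ℕ} (hd : 0 < d) (A : Matrix (Fin d) (Fin d) ℝ)
    (hA : ∀ i j, 0 < A i j) :
    ∃ lam : ℝ, 1 ≤ lam ∧
      tauC A = (Real.sqrt lam - 1)/(Real.sqrt lam + 1) ∧
      (∀ i k j l, A i j * A k l ≤ lam * (A k j * A i l)) := by
  haveI : Nonempty (Fin d) := ⟨⟨0, hd⟩⟩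
  obtain ⟨i0⟩ : Nonempty (Fin d) := inferInstance
  set S : Set ℝ := {x | ∃ i k j l, A i j ≠ 0 ∧ A k j ≠ 0 ∧ A i l ≠ 0 ∧ A k l ≠ 0 ∧
      x = Real.log (A i j * A k l / (A k j * A i l))} with hS
  have hfin : S.Finite := by
    apply Set.Finite.subset (Set.finite_range
      (fun p : Fin d × Fin d × Fin d × Fin d =>
        Real.log (A p.1 p.2.2.1 * A p.2.1 p.2.2.2 / (A p.2.1 p.2.2.1 * A p.1 p.2.2.2))))
    rintro x ⟨i, k, j, l, -, -, -, -, rfl⟩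
    exact ⟨⟨i, k, j, l⟩, rfl⟩
  have hbdd : BddAbove S := hfin.bddAbove
  set δ := sSup S with hδ
  have hmem0 : (0:ℝ) ∈ S := by
    refine ⟨i0, i0, i0, i0, (hA i0 i0).ne', (hA i0 i0).ne', (hA i0 i0).ne', (hA i0 i0).ne', ?_⟩
    rw [div_self (mul_pos (hA i0 i0) (hA i0 i0)).ne', Real.log_one]
  have hδ0 : 0 ≤ δ := le_csSup hbdd hmem0
  have hsatH : satH A := by
    refine ⟨Set.univ, Set.univ, Set.univ_nonempty, Set.univ_nonempty, fun i j => ?_⟩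
    simp [(hA i j).ne']
  have hdelta : deltaC A = ENNReal.ofReal δ := by
    rw [deltaC, if_pos hsatH]
  have hne : deltaC A ≠ ⊤ := by rw [hdelta]; exact ENNReal.ofReal_ne_top
  have htoReal : (deltaC A).toReal = δ := by rw [hdelta, ENNReal.toReal_ofReal hδ0]
  -- choose lam = exp δ
  refine ⟨Real.exp δ, Real.one_le_exp hδ0, ?_, ?_⟩
  · -- tauC A = (√lam - 1)/(√lam + 1)
    rw [tauC, if_neg hne, htoReal]
    have hsqrt : Real.sqrt (Real.exp δ) = Real.exp (δ/2) := by
      rw [show Real.exp δ = (Real.exp (δ/2))^2 from by rw [sq, ← Real.exp_add]; congr 1; ring,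
        Real.sqrt_sq (Real.exp_pos _).le]
    rw [hsqrt]
    rw [Real.tanh_eq_sinh_div_cosh, Real.sinh_eq, Real.cosh_eq]
    have h1 : Real.exp (δ/2) = Real.exp (δ/4) * Real.exp (δ/4) := by
      rw [← Real.exp_add]; ring_nf
    have h2 : Real.exp (-(δ/4)) = (Real.exp (δ/4))⁻¹ := Real.exp_neg _
    rw [h1, h2]
    have he : Real.exp (δ/4) ≠ 0 := (Real.exp_pos _).ne'
    have hden : Real.exp (δ/4) * Real.exp (δ/4) + 1 ≠ 0 := by positivity
    field_simp
  · -- cross bound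
    intro i k j l
    have hmem : Real.log (A i j * A k l / (A k j * A i l)) ∈ S :=
      ⟨i, k, j, l, (hA i j).ne', (hA k j).ne', (hA i l).ne', (hA k l).ne', rfl⟩
    have hle : Real.log (A i j * A k l / (A k j * A i l)) ≤ δ := le_csSup hbdd hmem
    have hpos : (0:ℝ) < A i j * A k l / (A k j * A i l) := div_pos (mul_pos (hA i j) (hA k l)) (mul_pos (hA k j) (hA i l))
    have := Real.exp_le_exp.2 hle
    rw [Real.exp_log hpos] at this
    rw [div_le_iff₀ (mul_pos (hA k j) (hA i l))] at this
    linarith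
lemma tanh_le_one (x : ℝ) : Real.tanh x ≤ 1 := by
  rw [Real.tanh_eq_sinh_div_cosh, div_le_one (Real.cosh_pos x), Real.sinh_eq, Real.cosh_eq]
  nlinarith [Real.exp_pos (-x)]

section vec
variable {d : ℕ}

lemma mulVec_pos {A : Matrix (Fin d) (Fin d) ℝ} (hA : ∀ i j, 0 < A i j)
    {x : Fin d → ℝ} (hx : ∀ j, 0 ≤ x j) (hx' : ∃ j, 0 < x j) :
    ∀ i, 0 < (A *ᵥ x) i := by
  intro i
  obtain ⟨j0, hj0⟩ := hx'
  have : (A *ᵥ x) i = ∑ j, A i j * x j := rfl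
  rw [this]
  exact Finset.sum_pos' (fun j _ => mul_nonneg (hA i j).le (hx j))
    ⟨j0, mem_univ j0, mul_pos (hA i j0) hj0⟩

lemma probVec_exists_pos (hd : 0 < d) {X : Fin d → ℝ} (hX : probVec X) : ∃ j, 0 < X j := by
  by_contra h
  push_neg at h
  have : ∑ i, X i ≤ 0 := Finset.sum_nonpos fun i _ => h i
  rw [hX.2] at this
  linarith

lemma l1_eq_sum {v : Fin d → ℝ} (hv : ∀ i, 0 ≤ v i) : l1 v = ∑ i, v i := by
  exact Finset.sum_congr rfl fun i _ => abs_of_nonneg (hv i)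

lemma l1_pos (hd : 0 < d) {v : Fin d → ℝ} (hv : ∀ i, 0 < v i) : 0 < l1 v := by
  haveI : Nonempty (Fin d) := ⟨⟨0, hd⟩⟩
  exact Finset.sum_pos (fun i _ => abs_pos.2 (hv i).ne') univ_nonempty

lemma nrm_apply (v : Fin d → ℝ) (i : Fin d) : nrm v i = (l1 v)⁻¹ * v i := rfl

lemma nrm_pos (hd : 0 < d) {v : Fin d → ℝ} (hv : ∀ i, 0 < v i) : ∀ i, 0 < nrm v i :=
  fun i => mul_pos (inv_pos.2 (l1_pos hd hv)) (hv i)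

lemma probVec_nrm (hd : 0 < d) {v : Fin d → ℝ} (hv : ∀ i, 0 < v i) : probVec (nrm v) := by
  constructor
  · exact fun i => (nrm_pos hd hv i).le
  · rw [show ∑ i, nrm v i = (l1 v)⁻¹ * ∑ i, v i from by rw [Finset.mul_sum]; rfl]
    rw [← l1_eq_sum (fun i => (hv i).le)]
    exact inv_mul_cancel₀ (l1_pos hd hv).ne'

lemma dom_nrm {R : ℝ} {v w : Fin d → ℝ} (hdom : Dom R v w) : Dom R (nrm v) (nrm w) := by
  intro i k
  have h := hdom i k
  have hc : 0 ≤ (l1 v)⁻¹ * (l1 w)⁻¹ := by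
    apply mul_nonneg <;> · apply inv_nonneg.2; exact Finset.sum_nonneg fun _ _ => abs_nonneg _
  calc nrm v i * nrm w k = ((l1 v)⁻¹ * (l1 w)⁻¹) * (v i * w k) := by
        rw [nrm_apply, nrm_apply]; ring
    _ ≤ ((l1 v)⁻¹ * (l1 w)⁻¹) * (R * (w i * v k)) := mul_le_mul_of_nonneg_left h hc
    _ = R * (nrm w i * nrm v k) := by rw [nrm_apply, nrm_apply]; ring

lemma dom_entry_le {R : ℝ} {w z : Fin d → ℝ} (hw : probVec w) (hz : probVec z)
    (hdom : Dom R w z) : ∀ i, w i ≤ R * z i := by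
  intro i
  have : w i = ∑ k, w i * z k := by rw [← Finset.mul_sum, hz.2, mul_one]
  rw [this]
  calc ∑ k, w i * z k ≤ ∑ k, R * (z i * w k) := Finset.sum_le_sum fun k _ => hdom i k
    _ = R * z i * ∑ k, w k := by rw [Finset.mul_sum]; exact Finset.sum_congr rfl fun k _ => by ring
    _ = R * z i := by rw [hw.2, mul_one]

lemma dom_symm {R : ℝ} {w z : Fin d → ℝ} (hdom : Dom R w z) : Dom R z w := by
  intro i k
  calc z i * w k = w k * z i := mul_comm _ _
    _ ≤ R * (z k * w i) := hdom k i
    _ = R * (w i * z k) := by ring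

lemma l1_diff_le {R : ℝ} {w z : Fin d → ℝ} (hw : probVec w) (hz : probVec z)
    (hR : 1 ≤ R) (hdom : Dom R w z) : l1 (w - z) ≤ 2*(R-1) := by
  have h1 := dom_entry_le hw hz hdom
  have h2 := dom_entry_le hz hw (dom_symm hdom)
  have hbound : ∀ i, |w i - z i| ≤ (R-1)*(w i + z i) := by
    intro i
    rw [abs_le]
    constructor
    · nlinarith [h2 i, hw.1 i, hz.1 i]
    · nlinarith [h1 i, hw.1 i, hz.1 i]
  calc l1 (w - z) = ∑ i, |w i - z i| := Finset.sum_congr rfl fun i _ => by rw [Pi.sub_apply]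
    _ ≤ ∑ i, (R-1)*(w i + z i) := Finset.sum_le_sum fun i _ => hbound i
    _ = (R-1) * (∑ i, w i + ∑ i, z i) := by
        rw [← Finset.sum_add_distrib, Finset.mul_sum]
    _ = 2*(R-1) := by rw [hw.2, hz.2]; ring

lemma l1_triangle (x y z : Fin d → ℝ) : l1 (x - z) ≤ l1 (x - y) + l1 (y - z) := by
  rw [l1, l1, l1, ← Finset.sum_add_distrib]
  apply Finset.sum_le_sum
  intro i _
  simp only [Pi.sub_apply]
  exact (abs_sub_le _ _ _)

end vec

lemma exp_sub_one_le {x c : ℝ} (hx : 0 ≤ x) (hxc : x ≤ c) :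
    Real.exp x - 1 ≤ x * Real.exp c := by
  have h1 : 1 - x ≤ Real.exp (-x) := by linarith [Real.add_one_le_exp (-x)]
  have h2 : (1 - x) * Real.exp x ≤ Real.exp (-x) * Real.exp x :=
    mul_le_mul_of_nonneg_right h1 (Real.exp_pos x).le
  rw [← Real.exp_add, neg_add_cancel, Real.exp_zero] at h2
  nlinarith [Real.exp_le_exp.2 hxc, Real.exp_pos x, hx]

section bp
variable {d : ℕ} (A : ℕ → Matrix (Fin d) (Fin d) ℝ)

lemma blockProd_self (m : ℕ) : blockProd A m m = 1 := by simp [blockProd]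

lemma blockProd_succ_left (m n : ℕ) :
    blockProd A m (m+(n+1)) = A (m+1) * blockProd A (m+1) ((m+1)+n) := by
  have htail : List.map ((fun i => A (m+1+i)) ∘ Nat.succ) (List.range n)
      = List.map (fun i => A ((m+1)+1+i)) (List.range n) :=
    List.map_congr_left fun a _ => by
      simp only [Function.comp_apply]
      exact congrArg A (by omega)
  simp only [blockProd, Nat.add_sub_cancel_left]
  rw [List.range_succ_eq_map, List.map_cons, List.map_map, htail, List.prod_cons]

lemma blockProd_one (m : ℕ) : blockProd A m (m+1) = A (m+1) := by
  rw [show m+1 = m+(0+1) from rfl, blockProd_succ_left, show (m+1)+0 = m+1 from rfl,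
    blockProd_self, mul_one]

lemma blockProd_split (m n : ℕ) :
    blockProd A 0 (m+n) = blockProd A 0 m * blockProd A m (m+n) := by
  simp only [blockProd, Nat.sub_zero, Nat.add_sub_cancel_left]
  rw [List.range_add, List.map_append, List.prod_append, List.map_map]
  congr 1
  refine congrArg List.prod (List.map_congr_left fun a _ => ?_)
  simp only [Function.comp_apply]
  exact congrArg A (by omega)

end bp
lemma main_dom {d : ℕ} (hd : 0 < d) (A : ℕ → Matrix (Fin d) (Fin d) ℝ) (γ D₀ : ℝ)
    (hγ0 : 0 ≤ γ) (hD0 : 0 ≤ D₀)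
    (hstep : ∀ s, 1 ≤ s → (∀ i j, 0 < A s i j) ∧ ∃ lam, 1 ≤ lam ∧ lam ≤ Real.exp D₀ ∧
      (Real.sqrt lam - 1)/(Real.sqrt lam + 1) ≤ γ ∧
      (∀ i k j l, A s i j * A s k l ≤ lam * (A s k j * A s i l))) :
    ∀ n m (x y : Fin d → ℝ), (∀ j, 0 ≤ x j) → (∃ j, 0 < x j) →
      (∀ j, 0 ≤ y j) → (∃ j, 0 < y j) →
      (∀ i, 0 < (blockProd A m (m+(n+1)) *ᵥ x) i) ∧
      (∀ i, 0 < (blockProd A m (m+(n+1)) *ᵥ y) i) ∧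
      Dom (Real.exp (γ^n * D₀)) (blockProd A m (m+(n+1)) *ᵥ x) (blockProd A m (m+(n+1)) *ᵥ y) := by
  intro n
  induction n with
  | zero =>
    intro m x y hx hx' hy hy'
    obtain ⟨hApos, lam, hlam1, hlamD, hτγ, hcross⟩ := hstep (m+1) (by omega)
    rw [blockProd_one]
    refine ⟨mulVec_pos hApos hx hx', mulVec_pos hApos hy hy', ?_⟩
    have hdom := dom_of_cross hcross hx hy
    apply dom_mono hdom
    · rw [pow_zero, one_mul]; exact hlamD
    · exact fun i => (mulVec_pos hApos hx hx' i).le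
    · exact fun i => (mulVec_pos hApos hy hy' i).le
  | succ n ih =>
    intro m x y hx hx' hy hy'
    obtain ⟨hApos, lam, hlam1, hlamD, hτγ, hcross⟩ := hstep (m+1) (by omega)
    obtain ⟨hux, huy, hdom⟩ := ih (m+1) x y hx hx' hy hy'
    rw [blockProd_succ_left, ← Matrix.mulVec_mulVec, ← Matrix.mulVec_mulVec]
    set u := blockProd A (m+1) ((m+1)+n) *ᵥ x with hu
    set w := blockProd A (m+1) ((m+1)+n) *ᵥ y with hw
    have hR1 : (1:ℝ) ≤ Real.exp (γ^n * D₀) :=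
      Real.one_le_exp (mul_nonneg (pow_nonneg hγ0 n) hD0)
    have hcontr := dom_contract hd hApos hlam1 hcross hux huy hR1 hdom
    refine ⟨mulVec_pos hApos (fun i => (hux i).le) ⟨⟨0,hd⟩, hux _⟩,
      mulVec_pos hApos (fun i => (huy i).le) ⟨⟨0,hd⟩, huy _⟩, ?_⟩
    apply dom_mono hcontr
    · calc Real.exp (γ^n * D₀) ^ ((Real.sqrt lam - 1)/(Real.sqrt lam + 1))
          ≤ Real.exp (γ^n * D₀) ^ γ := Real.rpow_le_rpow_of_exponent_le hR1 hτγ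
        _ = Real.exp (γ^(n+1) * D₀) := by
            rw [Real.rpow_def_of_pos (Real.exp_pos _), Real.log_exp]
            congr 1
            rw [pow_succ]
            ring
    · exact fun i => (mulVec_pos hApos (fun i => (hux i).le) ⟨⟨0,hd⟩, hux _⟩ i).le
    · exact fun i => (mulVec_pos hApos (fun i => (huy i).le) ⟨⟨0,hd⟩, huy _⟩ i).le

/-- **Proposition 4.2.** If all the `A n` have positive entries and
`γ := sup_n τ(A n) < 1`, then there are a positive probability vector `X*` and
`C > 0` such that `‖P n X/‖P n X‖ − X*‖ ≤ C·γ^n` for every `X ∈ S_d` and `n ≥ 1`. -/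
theorem positive_matrices_contraction {d : ℕ} (hd : 1 ≤ d)
    (A : ℕ → Matrix (Fin d) (Fin d) ℝ)
    (hpos : ∀ n, 1 ≤ n → ∀ i j, 0 < A n i j)
    (hγ : (⨆ n : ℕ, tauC (A (n + 1))) < 1) :
    ∃ (Xs : Fin d → ℝ) (C : ℝ), probVec Xs ∧ (∀ i, 0 < Xs i) ∧ 0 < C ∧
      ∀ X : Fin d → ℝ, probVec X → ∀ n : ℕ, 1 ≤ n →
        l1 (nrm (blockProd A 0 n *ᵥ X) - Xs) ≤ C * (⨆ n : ℕ, tauC (A (n + 1))) ^ n := by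
  have hd0 : 0 < d := hd
  set γ := ⨆ n : ℕ, tauC (A (n + 1)) with hγdef
  -- basic facts about γ
  have htau_le_one : ∀ B : Matrix (Fin d) (Fin d) ℝ, tauC B ≤ 1 := by
    intro B
    rw [tauC]
    split
    · exact le_rfl
    · exact tanh_le_one _
  have hbdd : BddAbove (Set.range fun n : ℕ => tauC (A (n+1))) := by
    refine ⟨1, ?_⟩
    rintro x ⟨n, rfl⟩
    exact htau_le_one _
  have hτγ : ∀ s, 1 ≤ s → tauC (A s) ≤ γ := by
    intro s hs
    have h := le_ciSup hbdd (s-1)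
    rwa [Nat.sub_add_cancel hs] at h
  have hγ0 : 0 ≤ γ := by
    obtain ⟨lam, hlam1, htau, -⟩ := posMatrix_pack hd0 (A 1) (hpos 1 le_rfl)
    have hq1 : 1 ≤ Real.sqrt lam := by
      rw [show (1:ℝ) = Real.sqrt 1 by simp]; exact Real.sqrt_le_sqrt hlam1
    have : 0 ≤ tauC (A 1) := by rw [htau]; exact div_nonneg (by linarith) (by linarith)
    exact this.trans (hτγ 1 le_rfl)
  set Λ : ℝ := (1+γ)/(1-γ) with hΛdef
  have h1γ : 0 < 1 - γ := by linarith
  have hΛ1 : 1 ≤ Λ := by rw [le_div_iff₀ h1γ]; linarith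
  set D₀ : ℝ := Real.log (Λ^2) with hD₀def
  have hD0 : 0 ≤ D₀ := Real.log_nonneg (by nlinarith)
  have hexpD : Real.exp D₀ = Λ^2 := Real.exp_log (by positivity)
  -- step package
  have hstep : ∀ s, 1 ≤ s → (∀ i j, 0 < A s i j) ∧ ∃ lam, 1 ≤ lam ∧ lam ≤ Real.exp D₀ ∧
      (Real.sqrt lam - 1)/(Real.sqrt lam + 1) ≤ γ ∧
      (∀ i k j l, A s i j * A s k l ≤ lam * (A s k j * A s i l)) := by
    intro s hs
    refine ⟨hpos s hs, ?_⟩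
    obtain ⟨lam, hlam1, htau, hcross⟩ := posMatrix_pack hd0 (A s) (hpos s hs)
    have hq1 : 1 ≤ Real.sqrt lam := by
      rw [show (1:ℝ) = Real.sqrt 1 by simp]; exact Real.sqrt_le_sqrt hlam1
    have hτs : (Real.sqrt lam - 1)/(Real.sqrt lam + 1) ≤ γ := by
      rw [← htau]; exact hτγ s hs
    refine ⟨lam, hlam1, ?_, hτs, hcross⟩
    have hqΛ : Real.sqrt lam ≤ Λ := by
      rw [div_le_iff₀ (by linarith : (0:ℝ) < Real.sqrt lam + 1)] at hτs
      rw [hΛdef, le_div_iff₀ h1γ]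
      nlinarith
    rw [hexpD, ← Real.sq_sqrt (by linarith : (0:ℝ) ≤ lam)]
    exact pow_le_pow_left₀ (by linarith) hqΛ 2
  have key := main_dom hd0 A γ D₀ hγ0 hD0 hstep
  -- the reference sequence
  set X₀ : Fin d → ℝ := fun _ => (d:ℝ)⁻¹ with hX₀def
  have hdne : (d:ℝ) ≠ 0 := Nat.cast_ne_zero.2 (by omega)
  have hX₀ : probVec X₀ := by
    constructor
    · intro i; rw [hX₀def]; positivity
    · rw [hX₀def]; simp [Finset.sum_const, Finset.card_univ]
      exact mul_inv_cancel₀ hdne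
  have hX₀pos : ∃ j, 0 < X₀ j := probVec_exists_pos hd0 hX₀
  set E : ℝ := 2 * D₀ * Real.exp D₀ with hEdef
  have hE0 : 0 ≤ E := by positivity
  -- pairwise bound
  have hpairDom : ∀ k (x y : Fin d → ℝ), (∀ j, 0 ≤ x j) → (∃ j, 0 < x j) →
      (∀ j, 0 ≤ y j) → (∃ j, 0 < y j) →
      (∀ i, 0 < (blockProd A 0 (k+1) *ᵥ x) i) ∧ (∀ i, 0 < (blockProd A 0 (k+1) *ᵥ y) i) ∧
      Dom (Real.exp (γ^k * D₀)) (nrm (blockProd A 0 (k+1) *ᵥ x)) (nrm (blockProd A 0 (k+1) *ᵥ y)) := by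
    intro k x y hx hx' hy hy'
    obtain ⟨h1, h2, h3⟩ := key k 0 x y hx hx' hy hy'
    rw [Nat.zero_add] at h1 h2 h3
    exact ⟨h1, h2, dom_nrm h3⟩
  have hRk1 : ∀ k : ℕ, (1:ℝ) ≤ Real.exp (γ^k * D₀) :=
    fun k => Real.one_le_exp (mul_nonneg (pow_nonneg hγ0 k) hD0)
  have hRkE : ∀ k : ℕ, 2*(Real.exp (γ^k * D₀) - 1) ≤ E * γ^k := by
    intro k
    have hγk1 : γ^k ≤ 1 := pow_le_one₀ hγ0 (le_of_lt hγ)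
    have hle : γ^k * D₀ ≤ D₀ := by nlinarith [pow_nonneg hγ0 k]
    have := exp_sub_one_le (mul_nonneg (pow_nonneg hγ0 k) hD0) hle
    rw [hEdef]
    nlinarith [this]
  have hpairl1 : ∀ k (x y : Fin d → ℝ), (∀ j, 0 ≤ x j) → (∃ j, 0 < x j) →
      (∀ j, 0 ≤ y j) → (∃ j, 0 < y j) →
      l1 (nrm (blockProd A 0 (k+1) *ᵥ x) - nrm (blockProd A 0 (k+1) *ᵥ y)) ≤ E * γ^k := by
    intro k x y hx hx' hy hy'
    obtain ⟨h1, h2, h3⟩ := hpairDom k x y hx hx' hy hy'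
    have := l1_diff_le (probVec_nrm hd0 h1) (probVec_nrm hd0 h2) (hRk1 k) h3
    linarith [hRkE k]
  set W : ℕ → (Fin d → ℝ) := fun k => nrm (blockProd A 0 (k+1) *ᵥ X₀) with hWdef
  have hWposvec : ∀ k i, 0 < (blockProd A 0 (k+1) *ᵥ X₀) i := by
    intro k
    obtain ⟨h1, -, -⟩ := hpairDom k X₀ X₀ hX₀.1 hX₀pos hX₀.1 hX₀pos
    exact h1
  have hWprob : ∀ k, probVec (W k) := fun k => probVec_nrm hd0 (hWposvec k)
  have hWpos : ∀ k i, 0 < W k i := fun k => nrm_pos hd0 (hWposvec k)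
  -- the tail vector trick
  have htail : ∀ k k', k ≤ k' → ∃ y : Fin d → ℝ, (∀ j, 0 ≤ y j) ∧ (∃ j, 0 < y j) ∧
      blockProd A 0 (k'+1) *ᵥ X₀ = blockProd A 0 (k+1) *ᵥ y := by
    intro k k' hkk
    rcases eq_or_lt_of_le hkk with rfl | hlt
    · exact ⟨X₀, hX₀.1, hX₀pos, rfl⟩
    · obtain ⟨j, hj⟩ : ∃ j, k'+1 = (k+1)+(j+1) := ⟨k'-k-1, by omega⟩
      set y := blockProd A (k+1) ((k+1)+(j+1)) *ᵥ X₀ with hy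
      obtain ⟨h1, -, -⟩ := key j (k+1) X₀ X₀ hX₀.1 hX₀pos hX₀.1 hX₀pos
      refine ⟨y, fun i => (h1 i).le, ⟨⟨0,hd0⟩, h1 _⟩, ?_⟩
      rw [hj, blockProd_split A (k+1) (j+1), ← Matrix.mulVec_mulVec]
  have hWdom : ∀ k k', k ≤ k' → Dom (Real.exp (γ^k * D₀)) (W k) (W k') := by
    intro k k' hkk
    obtain ⟨y, hy1, hy2, hy3⟩ := htail k k' hkk
    obtain ⟨-, -, h3⟩ := hpairDom k X₀ y hX₀.1 hX₀pos hy1 hy2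
    rw [hWdef]
    simp only []
    rw [hy3]
    exact h3
  have hWdiff : ∀ k k', k ≤ k' → l1 (W k - W k') ≤ E * γ^k := by
    intro k k' hkk
    have := l1_diff_le (hWprob k) (hWprob k') (hRk1 k) (hWdom k k' hkk)
    linarith [hRkE k]
  -- Cauchy sequence
  have hdist : ∀ k k', k ≤ k' → dist (W k) (W k') ≤ E * γ^k := by
    intro k k' hkk
    rw [dist_pi_le_iff (by positivity)]
    intro i
    rw [Real.dist_eq]
    calc |W k i - W k' i| = |(W k - W k') i| := by rw [Pi.sub_apply]
      _ ≤ ∑ i, |(W k - W k') i| := Finset.single_le_sum (f := fun i => |(W k - W k') i|) (fun i _ => abs_nonneg _) (mem_univ i)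
      _ ≤ E * γ^k := hWdiff k k' hkk
  have hcauchy : CauchySeq W := by
    apply cauchySeq_of_le_geometric γ E hγ
    intro k
    exact hdist k (k+1) (by omega)
  obtain ⟨Xs, hXs⟩ := cauchySeq_tendsto_of_complete hcauchy
  have hXsi : ∀ i, Tendsto (fun k => W k i) atTop (nhds (Xs i)) :=
    fun i => (tendsto_pi_nhds.1 hXs) i
  -- probVec Xs
  have hXs_nonneg : ∀ i, 0 ≤ Xs i := fun i =>
    ge_of_tendsto' (hXsi i) fun k => (hWprob k).1 i
  have hXs_sum : ∑ i, Xs i = 1 := by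
    have h1 : Tendsto (fun k => ∑ i, W k i) atTop (nhds (∑ i, Xs i)) :=
      tendsto_finset_sum _ fun i _ => hXsi i
    have h2 : (fun k => ∑ i, W k i) = fun _ => (1:ℝ) := funext fun k => (hWprob k).2
    rw [h2] at h1
    exact tendsto_nhds_unique h1 tendsto_const_nhds
  -- positivity of Xs
  have hXs_pos : ∀ i, 0 < Xs i := by
    intro i
    have hlow : ∀ k, W 0 i / Real.exp (γ^0 * D₀) ≤ W k i := by
      intro k
      have h := dom_entry_le (hWprob 0) (hWprob k) (hWdom 0 k (Nat.zero_le k)) i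
      rw [div_le_iff₀ (Real.exp_pos _)]
      nlinarith [hWpos k i, Real.exp_pos (γ^0 * D₀)]
    have := ge_of_tendsto' (hXsi i) hlow
    have hpos : 0 < W 0 i / Real.exp (γ^0 * D₀) := div_pos (hWpos 0 i) (Real.exp_pos _)
    linarith
  -- limit of the tail bound
  have hWlim : ∀ k, l1 (W k - Xs) ≤ E * γ^k := by
    intro k
    have hF : Continuous (fun z : Fin d → ℝ => l1 (W k - z)) := by
      apply continuous_finset_sum
      intro i _
      exact ((continuous_const.sub (continuous_apply i)).abs)
    have hten : Tendsto (fun k' => l1 (W k - W k')) atTop (nhds (l1 (W k - Xs))) :=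
      (hF.tendsto Xs).comp hXs
    apply le_of_tendsto hten
    filter_upwards [eventually_ge_atTop k] with k' hk'
    exact hWdiff k k' hk'
  -- final constant
  set C : ℝ := max 1 (2*E/γ) with hCdef
  have hC0 : 0 < C := lt_of_lt_of_le one_pos (le_max_left _ _)
  refine ⟨Xs, C, ⟨hXs_nonneg, hXs_sum⟩, hXs_pos, hC0, ?_⟩
  intro X hX n hn
  obtain ⟨k, rfl⟩ : ∃ k, n = k+1 := ⟨n-1, by omega⟩
  have hXpos' := probVec_exists_pos hd0 hX
  have h1 : l1 (nrm (blockProd A 0 (k+1) *ᵥ X) - W k) ≤ E * γ^k :=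
    hpairl1 k X X₀ hX.1 hXpos' hX₀.1 hX₀pos
  have h2 : l1 (W k - Xs) ≤ E * γ^k := hWlim k
  have h3 := l1_triangle (nrm (blockProd A 0 (k+1) *ᵥ X)) (W k) Xs
  have hfinal : 2 * (E * γ^k) ≤ C * γ^(k+1) := by
    by_cases hγz : γ = 0
    · have hΛ1' : Λ = 1 := by rw [hΛdef, hγz]; norm_num
      have hD0' : D₀ = 0 := by rw [hD₀def, hΛ1']; norm_num
      have hE' : E = 0 := by rw [hEdef, hD0']; ring
      rw [hE', hγz]
      simp
    · have hγpos : 0 < γ := lt_of_le_of_ne hγ0 (Ne.symm hγz)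
      have : 2 * (E * γ^k) = (2*E/γ) * γ^(k+1) := by
        field_simp
        ring
      rw [this]
      exact mul_le_mul_of_nonneg_right (le_max_right _ _) (by positivity)
  linarith
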